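/- Let Ψ be a d×d diagonal matrix with positive entries, W a d×p matrix, M = I_p + WᵀΨ⁻¹W, and L = Ψ⁻¹WM⁻¹. If x ∼ N(0, Ψ⁻¹) and ε ∼ N(0, I_p) are independent Gaussian vectors, then x⁺ = (I_d − LWᵀ)x + Lε has mean zero and covariance E[x⁺(x⁺)ᵀ] = (WWᵀ + Ψ)⁻¹. -/
import Mathlib
open Matrix MeasureTheory

lemma sum_mul_sum_pt {Ω : Type*} {m n : ℕ} (a : Fin m → ℝ) (b : Fin n → ℝ)
    (f : Fin m → Ω → ℝ) (g : Fin n → Ω → ℝ) (ω : Ω) :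
    (∑ k, a k * f k ω) * (∑ l, b l * g l ω)
      = ∑ k, ∑ l, a k * b l * (f k ω * g l ω) := by
  rw [Finset.sum_mul_sum]
  exact Finset.sum_congr rfl fun k _ => Finset.sum_congr rfl fun l _ => by ring

lemma integrable_sum_mul_sum {Ω : Type*} [MeasurableSpace Ω] (μ : Measure Ω)
    {m n : ℕ} (a : Fin m → ℝ) (b : Fin n → ℝ) (f : Fin m → Ω → ℝ) (g : Fin n → Ω → ℝ)
    (hfg : ∀ k l, Integrable (fun ω => f k ω * g l ω) μ) :
    Integrable (fun ω => (∑ k, a k * f k ω) * (∑ l, b l * g l ω)) μ := by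
  simp_rw [sum_mul_sum_pt]
  exact integrable_finset_sum _ fun k _ =>
    integrable_finset_sum _ fun l _ => (hfg k l).const_mul _

lemma integral_sum_mul_sum {Ω : Type*} [MeasurableSpace Ω] (μ : Measure Ω)
    {m n : ℕ} (a : Fin m → ℝ) (b : Fin n → ℝ) (f : Fin m → Ω → ℝ) (g : Fin n → Ω → ℝ)
    (hfg : ∀ k l, Integrable (fun ω => f k ω * g l ω) μ) :
    ∫ ω, (∑ k, a k * f k ω) * (∑ l, b l * g l ω) ∂μ
      = ∑ k, ∑ l, a k * b l * ∫ ω, f k ω * g l ω ∂μ := by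
  simp_rw [sum_mul_sum_pt]
  rw [integral_finset_sum]
  · refine Finset.sum_congr rfl fun k _ => ?_
    rw [integral_finset_sum]
    · exact Finset.sum_congr rfl fun l _ => integral_const_mul _ _
    · exact fun l _ => (hfg k l).const_mul _
  · exact fun k _ => integrable_finset_sum _ fun l _ => (hfg k l).const_mul _

lemma matrix_key {d p : ℕ} (ψ : Fin d → ℝ) (hψ : ∀ i, 0 < ψ i)
    (Ψ : Matrix (Fin d) (Fin d) ℝ) (hΨ : Ψ = Matrix.diagonal ψ)
    (W : Matrix (Fin d) (Fin p) ℝ)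
    (M : Matrix (Fin p) (Fin p) ℝ) (hM : M = 1 + Wᵀ * Ψ⁻¹ * W)
    (L : Matrix (Fin d) (Fin p) ℝ) (hL : L = Ψ⁻¹ * W * M⁻¹) :
    (1 - L * Wᵀ) * Ψ⁻¹ * (1 - L * Wᵀ)ᵀ + L * Lᵀ = (W * Wᵀ + Ψ)⁻¹ := by
  have hΨdet : IsUnit Ψ.det := by
    rw [hΨ, det_diagonal]
    exact (Finset.prod_pos (fun i _ => hψ i)).ne'.isUnit
  have hΨ1 : Ψ⁻¹ * Ψ = 1 := nonsing_inv_mul _ hΨdet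
  have hΨsymm : (Ψ⁻¹)ᵀ = Ψ⁻¹ := by
    rw [transpose_nonsing_inv, hΨ, diagonal_transpose]
  have hΨinv_diag : Ψ⁻¹ = Matrix.diagonal fun i => (ψ i)⁻¹ := by
    refine Matrix.inv_eq_left_inv ?_
    rw [hΨ, diagonal_mul_diagonal]
    rw [show (fun i => (ψ i)⁻¹ * ψ i) = fun _ => (1:ℝ) from
      funext fun i => inv_mul_cancel₀ (hψ i).ne', Matrix.diagonal_one]
  have hΨinvPSD : (Ψ⁻¹).PosSemidef := by
    rw [hΨinv_diag]
    exact posSemidef_diagonal_iff.mpr fun i => inv_nonneg.mpr (hψ i).le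
  have hWH : Wᴴ = Wᵀ := rfl
  have hMpd : M.PosDef := by
    rw [hM]
    exact Matrix.PosDef.add_posSemidef Matrix.PosDef.one
      (hWH ▸ hΨinvPSD.conjTranspose_mul_mul_same W)
  have hMdet : IsUnit M.det := (isUnit_iff_isUnit_det _).mp hMpd.isUnit
  have hM1 : M⁻¹ * M = 1 := nonsing_inv_mul _ hMdet
  have hMsymm : Mᵀ = M := by
    rw [hM]
    simp [transpose_add, transpose_mul, hΨsymm, Matrix.mul_assoc]
  have hMisymm : (M⁻¹)ᵀ = M⁻¹ := by rw [transpose_nonsing_inv, hMsymm]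
  have hLM : L * M = Ψ⁻¹ * W := by
    rw [hL, Matrix.mul_assoc, hM1, Matrix.mul_one]
  have hT : (1 - L * Wᵀ)ᵀ = 1 - W * Lᵀ := by
    simp [transpose_sub, transpose_mul]
  have h1 : Wᵀ * Ψ⁻¹ * W = M - 1 := by rw [hM]; abel
  have e2 : L * (Wᵀ * (Ψ⁻¹ * (W * Lᵀ))) + L * Lᵀ = Ψ⁻¹ * (W * Lᵀ) := by
    have h : L * (Wᵀ * (Ψ⁻¹ * (W * Lᵀ))) + L * Lᵀ = (L * M) * Lᵀ := by
      rw [hM]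
      simp only [Matrix.mul_add, Matrix.add_mul, Matrix.one_mul, Matrix.mul_one,
        Matrix.mul_assoc]
      abel
    rw [h, hLM, Matrix.mul_assoc]
  have lhsC : (1 - L * Wᵀ) * Ψ⁻¹ * (1 - L * Wᵀ)ᵀ + L * Lᵀ
      = Ψ⁻¹ - Ψ⁻¹ * W * M⁻¹ * (Wᵀ * Ψ⁻¹) := by
    rw [hT]
    have e1 : (1 - L * Wᵀ) * Ψ⁻¹ * (1 - W * Lᵀ) + L * Lᵀ
        = Ψ⁻¹ - L * (Wᵀ * Ψ⁻¹) - Ψ⁻¹ * (W * Lᵀ)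
          + (L * (Wᵀ * (Ψ⁻¹ * (W * Lᵀ))) + L * Lᵀ) := by
      simp only [Matrix.sub_mul, Matrix.mul_sub, Matrix.one_mul, Matrix.mul_one,
        Matrix.mul_assoc]
      abel
    rw [e1, e2]
    rw [hL]
    simp only [Matrix.mul_assoc]
    abel
  have hleft : (Ψ⁻¹ - Ψ⁻¹ * W * M⁻¹ * (Wᵀ * Ψ⁻¹)) * (W * Wᵀ + Ψ) = 1 := by
    have h3 : Wᵀ * (Ψ⁻¹ * (W * Wᵀ)) = M * Wᵀ - Wᵀ := by
      rw [← Matrix.mul_assoc, ← Matrix.mul_assoc, h1, Matrix.sub_mul, Matrix.one_mul]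
    have e1 : (Ψ⁻¹ - Ψ⁻¹ * W * M⁻¹ * (Wᵀ * Ψ⁻¹)) * (W * Wᵀ + Ψ)
        = Ψ⁻¹ * (W * Wᵀ) + Ψ⁻¹ * Ψ
          - Ψ⁻¹ * (W * (M⁻¹ * (Wᵀ * (Ψ⁻¹ * (W * Wᵀ)))))
          - Ψ⁻¹ * (W * (M⁻¹ * (Wᵀ * (Ψ⁻¹ * Ψ)))) := by
      simp only [Matrix.sub_mul, Matrix.mul_add, Matrix.mul_assoc]
      abel
    rw [e1, hΨ1, h3, Matrix.mul_sub, ← Matrix.mul_assoc M⁻¹, hM1, Matrix.one_mul,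
      Matrix.mul_one, Matrix.mul_sub, Matrix.mul_sub]
    abel
  rw [lhsC, Matrix.inv_eq_left_inv hleft]

theorem stmt_1 {d p : ℕ} (ψ : Fin d → ℝ) (hψ : ∀ i, 0 < ψ i)
    (Ψ : Matrix (Fin d) (Fin d) ℝ) (hΨ : Ψ = Matrix.diagonal ψ)
    (W : Matrix (Fin d) (Fin p) ℝ)
    (M : Matrix (Fin p) (Fin p) ℝ) (hM : M = 1 + Wᵀ * Ψ⁻¹ * W)
    (L : Matrix (Fin d) (Fin p) ℝ) (hL : L = Ψ⁻¹ * W * M⁻¹)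
    {Ω : Type*} [MeasurableSpace Ω] (μ : Measure Ω) [IsProbabilityMeasure μ]
    (x : Ω → Fin d → ℝ) (ε : Ω → Fin p → ℝ)
    (hxInt : ∀ i, Integrable (fun ω => x ω i) μ)
    (hεInt : ∀ j, Integrable (fun ω => ε ω j) μ)
    (hxxInt : ∀ i i', Integrable (fun ω => x ω i * x ω i') μ)
    (hεεInt : ∀ j j', Integrable (fun ω => ε ω j * ε ω j') μ)
    (hxεInt : ∀ i j, Integrable (fun ω => x ω i * ε ω j) μ)
    (hxmean : ∀ i, ∫ ω, x ω i ∂μ = 0)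
    (hεmean : ∀ j, ∫ ω, ε ω j ∂μ = 0)
    (hxcov : ∀ i i', ∫ ω, x ω i * x ω i' ∂μ = Ψ⁻¹ i i')
    (hεcov : ∀ j j', ∫ ω, ε ω j * ε ω j' ∂μ = (1 : Matrix (Fin p) (Fin p) ℝ) j j')
    (hindep : ∀ i j, ∫ ω, x ω i * ε ω j ∂μ = 0)
    (xplus : Ω → Fin d → ℝ)
    (hxplus : ∀ ω, xplus ω = (1 - L * Wᵀ) *ᵥ x ω + L *ᵥ ε ω) :
    (∀ i, ∫ ω, xplus ω i ∂μ = 0) ∧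
    (∀ i i', ∫ ω, xplus ω i * xplus ω i' ∂μ = (W * Wᵀ + Ψ)⁻¹ i i') := by
  set A : Matrix (Fin d) (Fin d) ℝ := 1 - L * Wᵀ with hA
  have hεxInt : ∀ j k, Integrable (fun ω => ε ω j * x ω k) μ := fun j k => by
    simpa [mul_comm] using hxεInt k j
  have hx' : ∀ ω i, xplus ω i = (∑ k, A i k * x ω k) + (∑ j, L i j * ε ω j) := by
    intro ω i
    rw [hxplus]
    simp [Matrix.mulVec, dotProduct]
  constructor
  · intro i
    simp_rw [hx' _ i]
    rw [integral_add (integrable_finset_sum _ fun k _ => (hxInt k).const_mul _)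
      (integrable_finset_sum _ fun j _ => (hεInt j).const_mul _),
      integral_finset_sum _ fun k _ => (hxInt k).const_mul _,
      integral_finset_sum _ fun j _ => (hεInt j).const_mul _]
    simp [integral_const_mul, hxmean, hεmean]
  · intro i i'
    simp_rw [hx']
    have key : ∫ ω, ((∑ k, A i k * x ω k) + (∑ j, L i j * ε ω j)) *
        ((∑ k, A i' k * x ω k) + (∑ j, L i' j * ε ω j)) ∂μ
        = (∑ k, ∑ k', A i k * A i' k' * ∫ ω, x ω k * x ω k' ∂μ)
        + (∑ k, ∑ j, A i k * L i' j * ∫ ω, x ω k * ε ω j ∂μ)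
        + (∑ j, ∑ k, L i j * A i' k * ∫ ω, ε ω j * x ω k ∂μ)
        + (∑ j, ∑ j', L i j * L i' j' * ∫ ω, ε ω j * ε ω j' ∂μ) := by
      have hpt : ∀ ω, ((∑ k, A i k * x ω k) + (∑ j, L i j * ε ω j)) *
          ((∑ k, A i' k * x ω k) + (∑ j, L i' j * ε ω j))
          = (∑ k, A i k * x ω k) * (∑ k, A i' k * x ω k)
          + (∑ k, A i k * x ω k) * (∑ j, L i' j * ε ω j)
          + (∑ j, L i j * ε ω j) * (∑ k, A i' k * x ω k)
          + (∑ j, L i j * ε ω j) * (∑ j, L i' j * ε ω j) := fun ω => by ring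
      simp_rw [hpt]
      rw [integral_add, integral_add, integral_add]
      · rw [integral_sum_mul_sum μ _ _ _ _ hxxInt,
          integral_sum_mul_sum μ _ _ _ _ hxεInt,
          integral_sum_mul_sum μ _ _ _ _ hεxInt,
          integral_sum_mul_sum μ _ _ _ _ hεεInt]
      · exact integrable_sum_mul_sum μ _ _ _ _ hxxInt
      · exact integrable_sum_mul_sum μ _ _ _ _ hxεInt
      · exact (integrable_sum_mul_sum μ _ _ _ _ hxxInt).add
          (integrable_sum_mul_sum μ _ _ _ _ hxεInt)
      · exact integrable_sum_mul_sum μ _ _ _ _ hεxInt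
      · exact ((integrable_sum_mul_sum μ _ _ _ _ hxxInt).add
          (integrable_sum_mul_sum μ _ _ _ _ hxεInt)).add
          (integrable_sum_mul_sum μ _ _ _ _ hεxInt)
      · exact integrable_sum_mul_sum μ _ _ _ _ hεεInt
    rw [key]
    have hz1 : (∑ k, ∑ j, A i k * L i' j * ∫ ω, x ω k * ε ω j ∂μ) = 0 := by
      simp [hindep]
    have hz2 : (∑ j, ∑ k, L i j * A i' k * ∫ ω, ε ω j * x ω k ∂μ) = 0 := by
      have : ∀ j k, ∫ ω, ε ω j * x ω k ∂μ = 0 := fun j k => by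
        simp_rw [mul_comm (ε _ j)]; exact hindep k j
      simp [this]
    have hs1 : (∑ k, ∑ k', A i k * A i' k' * ∫ ω, x ω k * x ω k' ∂μ)
        = (A * Ψ⁻¹ * Aᵀ) i i' := by
      simp_rw [hxcov, Matrix.mul_apply, Matrix.transpose_apply, Finset.sum_mul]
      rw [Finset.sum_comm]
      exact Finset.sum_congr rfl fun k' _ => Finset.sum_congr rfl fun k _ => by ring
    have hs2 : (∑ j, ∑ j', L i j * L i' j' * ∫ ω, ε ω j * ε ω j' ∂μ)
        = (L * Lᵀ) i i' := by
      simp_rw [hεcov, Matrix.one_apply, Matrix.mul_apply, Matrix.transpose_apply]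
      simp [mul_ite, Finset.sum_ite_eq]
    rw [hz1, hz2, hs1, hs2, add_zero, add_zero,
      show (A * Ψ⁻¹ * Aᵀ) i i' + (L * Lᵀ) i i' = (A * Ψ⁻¹ * Aᵀ + L * Lᵀ) i i' from rfl,
      matrix_key ψ hψ Ψ hΨ W M hM L hL]
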